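/- The greedy algorithm for Generic Search with a partial order is correct: given a connected graph G, a start vertex r, and a partial order π on V(G) with r minimal in π, there exists a Generic Search ordering of G starting at r that is a linear extension of π if and only if the following process visits all vertices: start with S = {r}; repeatedly remove any v from S, append it to the ordering, delete v from π, mark all neighbors of v, and add to S every marked vertex that is currently minimal in the remaining restriction of π to unvisited vertices. -/

import Mathlib

variable {V : Type*}

/-- `v` is eligible w.r.t. the set `P` of visited vertices: `v` is unvisited, marked
(has a visited neighbor), and minimal in the restriction of `π` to unvisited vertices. -/
def GreedyEligible [DecidableEq V] (G : SimpleGraph V) (π : V → V → Prop)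
    (P : Finset V) (v : V) : Prop :=
  v ∉ P ∧ (∃ u ∈ P, G.Adj u v) ∧ ∀ w : V, π w v → w ≠ v → w ∈ P

/-- A run of the greedy algorithm: a duplicate-free list starting at `r` in which
every subsequent vertex is eligible w.r.t. the preceding prefix. -/
def GreedyRun [DecidableEq V] (G : SimpleGraph V) (π : V → V → Prop) (r : V)
    (l : List V) : Prop :=
  l.head? = some r ∧ l.Nodup ∧
    ∀ (i : ℕ) (h : i + 1 < l.length),
      GreedyEligible G π ((l.take (i + 1)).toFinset) (l.get ⟨i + 1, h⟩)

lemma run_extend [DecidableEq V] {G : SimpleGraph V} {π : V → V → Prop} {r : V}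
    {l : List V} {v : V} (hl : GreedyRun G π r l) (hv : GreedyEligible G π l.toFinset v) :
    GreedyRun G π r (l ++ [v]) := by
  obtain ⟨h1, h2, h3⟩ := hl
  have hne : l ≠ [] := by intro h; simp [h] at h1
  refine ⟨?_, ?_, ?_⟩
  · rcases l with _ | ⟨a, t⟩
    · exact absurd rfl hne
    · simpa using h1
  · simp only [List.nodup_append, List.nodup_cons, List.nodup_nil]
    exact ⟨h2, by simp, by simpa using fun (a : V) (ha : a ∈ l) (hav : a = v) => hv.1 (List.mem_toFinset.2 (hav ▸ ha))⟩
  · intro i h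
    simp only [List.length_append, List.length_singleton] at h
    rcases lt_or_eq_of_le (Nat.lt_succ_iff.1 h) with h' | h'
    · have hget : (l ++ [v]).get ⟨i + 1, by simp; omega⟩ = l.get ⟨i + 1, h'⟩ := by
        exact List.getElem_append_left h'
      have htake : (l ++ [v]).take (i + 1) = l.take (i + 1) :=
        List.take_append_of_le_length (by omega)
      rw [hget, htake]
      exact h3 i h'
    · have hget : (l ++ [v]).get ⟨i + 1, by simp; omega⟩ = v := by
        simp only [List.get_eq_getElem]
        rw [List.getElem_append_right (by omega)]
        simp [h']
      have htake : (l ++ [v]).take (i + 1) = l := by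
        rw [h']; exact List.take_left
      rw [hget, htake]
      exact hv

lemma head_getElem_zero {l : List V} {r : V} (h : l.head? = some r) :
    ∃ hne : 0 < l.length, l[0] = r := by
  rcases l with _ | ⟨a, t⟩
  · simp at h
  · simp at h; exact ⟨by simp, by simp [h]⟩


/-- Correctness of the greedy algorithm for the PSOP of Generic Search: there is a
Generic Search ordering of `G` starting at `r` extending `π` iff every maximal
greedy run visits all vertices. -/
theorem greedy_generic_search_correct [Fintype V] [DecidableEq V]
    (G : SimpleGraph V) (hconn : G.Connected) (r : V)
    (π : V → V → Prop) (hπ : IsPartialOrder V π)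
    (hr : ∀ w : V, π w r → w = r) :
    (∃ l : List V, l.head? = some r ∧ l.Nodup ∧ (∀ v : V, v ∈ l) ∧
        (∀ (i : ℕ) (h : i + 1 < l.length),
          ∃ (j : ℕ) (hj : j ≤ i), G.Adj (l.get ⟨j, by omega⟩) (l.get ⟨i + 1, h⟩)) ∧
        (∀ x y : V, π x y → x ≠ y → l.idxOf x < l.idxOf y)) ↔
      (∀ l : List V, GreedyRun G π r l →
        (∀ v : V, ¬ GreedyEligible G π l.toFinset v) → ∀ v : V, v ∈ l) := by
  constructor
  · rintro ⟨L, hL1, hL2, hL3, hL4, hL5⟩ l hl hmax v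
    by_contra hv
    -- pick the unvisited vertex with minimal index in L
    obtain ⟨m, hm, hmmin⟩ := Finset.exists_min_image
      (Finset.univ.filter (fun u => u ∉ l)) (fun u => L.idxOf u)
      ⟨v, by simp [hv]⟩
    simp only [Finset.mem_filter, Finset.mem_univ, true_and] at hm
    have hmin : ∀ u : V, L.idxOf u < L.idxOf m → u ∈ l := by
      intro u hu
      by_contra hul
      exact absurd (hmmin u (by simp [hul])) (by omega)
    obtain ⟨hL0, hL0r⟩ := head_getElem_zero hL1
    have hrl : r ∈ l := by
      obtain ⟨h0, h0r⟩ := head_getElem_zero hl.1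
      exact h0r ▸ List.getElem_mem h0
    have hmr : m ≠ r := fun h => hm (h ▸ hrl)
    set k := L.idxOf m with hk
    have hkl : k < L.length := List.idxOf_lt_length_iff.2 (hL3 m)
    have hgk : L[k] = m := List.getElem_idxOf hkl
    have hr0 : L.idxOf r = 0 := by
      have h0 := List.Nodup.idxOf_getElem hL2 0 hL0
      rw [hL0r] at h0; exact h0
    have hk0 : k ≠ 0 := by
      intro h0
      exact hmr ((List.idxOf_inj (hL3 m)).1 (by rw [← hk, h0, hr0]))
    have hkeq : k - 1 + 1 = k := by omega
    apply hmax m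
    refine ⟨by simpa using hm, ?_, ?_⟩
    · obtain ⟨j, hj, hadj⟩ := hL4 (k - 1) (by omega)
      refine ⟨L.get ⟨j, by omega⟩, ?_, ?_⟩
      · apply List.mem_toFinset.2
        apply hmin
        simp only [List.get_eq_getElem]
        rw [List.Nodup.idxOf_getElem hL2]
        omega
      · have : L.get ⟨k - 1 + 1, by omega⟩ = m := by
          simp only [List.get_eq_getElem]
          simp_rw [hkeq]; exact hgk
        convert hadj using 2
        exact this.symm
    · intro w hw hwm
      apply List.mem_toFinset.2
      exact hmin w (hL5 w m hw hwm)
  · intro H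
    -- a greedy run of maximal length
    set T : Set ℕ := {n | ∃ l : List V, GreedyRun G π r l ∧ l.length = n} with hT
    have hrun1 : GreedyRun G π r [r] := by
      refine ⟨rfl, List.nodup_singleton r, ?_⟩
      intro i h
      simp at h
    have hne : T.Nonempty := ⟨1, [r], hrun1, rfl⟩
    have hbdd : BddAbove T := by
      refine ⟨Fintype.card V, ?_⟩
      rintro n ⟨l, hl, rfl⟩
      exact hl.2.1.length_le_card
    obtain ⟨l, hl, hlen⟩ := Nat.sSup_mem hne hbdd
    have hmax : ∀ v : V, ¬ GreedyEligible G π l.toFinset v := by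
      intro v hv
      have : (l ++ [v]).length ∈ T := ⟨l ++ [v], run_extend hl hv, rfl⟩
      have := le_csSup hbdd this
      simp [hlen] at this
    have hcov := H l hl hmax
    refine ⟨l, hl.1, hl.2.1, hcov, ?_, ?_⟩
    · intro i h
      obtain ⟨-, ⟨u, hu, hadj⟩, -⟩ := hl.2.2 i h
      rw [List.mem_toFinset] at hu
      obtain ⟨j, hj, hju⟩ := List.mem_iff_getElem.1 hu
      have hjlen : j < l.length := lt_of_lt_of_le hj (by simp [List.length_take])
      have hji : j ≤ i := by
        simp [List.length_take] at hj
        omega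
      refine ⟨j, hji, ?_⟩
      have : l.get ⟨j, by omega⟩ = u := by
        simp only [List.get_eq_getElem]
        rw [← hju, List.getElem_take]
      rw [this]
      exact hadj
    · intro x y hxy hxyne
      have hyr : y ≠ r := fun h => hxyne (hr x (h ▸ hxy) ▸ (h ▸ rfl))
      obtain ⟨hL0, hL0r⟩ := head_getElem_zero hl.1
      set k := l.idxOf y with hk
      have hkl : k < l.length := List.idxOf_lt_length_iff.2 (hcov y)
      have hgk : l[k] = y := List.getElem_idxOf hkl
      have hr0 : l.idxOf r = 0 := by
        have h0 := List.Nodup.idxOf_getElem hl.2.1 0 hL0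
        rw [hL0r] at h0; exact h0
      have hk0 : k ≠ 0 := by
        intro h0
        exact hyr ((List.idxOf_inj (hcov y)).1 (by rw [← hk, h0, hr0]))
      obtain ⟨-, -, hmin⟩ := hl.2.2 (k - 1) (by omega)
      have hgety : l.get ⟨k - 1 + 1, by omega⟩ = y := by
        simp only [List.get_eq_getElem]
        simp_rw [show k - 1 + 1 = k by omega]
        exact hgk
      rw [hgety] at hmin
      have hx : x ∈ (l.take (k - 1 + 1)).toFinset := hmin x hxy hxyne
      rw [List.mem_toFinset] at hx
      obtain ⟨j, hj, hju⟩ := List.mem_iff_getElem.1 hx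
      rw [List.length_take] at hj
      have hjlen : j < l.length := by omega
      have : l.idxOf x = j := by
        rw [← hju, List.getElem_take]
        exact List.Nodup.idxOf_getElem hl.2.1 j hjlen
      omega
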